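/- Fix an integer k ≥ 1 and let G be the graph with vertex set {w₁, w₂} ∪ R ∪ B, where |R| = |B| = k, R, B, {w₁, w₂} are pairwise disjoint, and the edge set consists exactly of all pairs {r, wᵢ} for r ∈ R, i ∈ {1,2} and all pairs {b, wᵢ} for b ∈ B, i ∈ {1,2}. Consider any coloring c of the vertices by {red, blue} with c(r) = red for all r ∈ R and c(b) = blue for all b ∈ B. If c(w₁) ≠ c(w₂), then the red vertices induce a connected subgraph and the blue vertices induce a connected subgraph (so there are exactly 2 monochromatic components). If c(w₁) = c(w₂) = red, then the blue vertices induce exactly k connected components (and symmetrically if both are blue). -/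

import Mathlib

open SimpleGraph

variable {V : Type*}

/-- A local-minimum plateau: a nonempty, connected (in the induced subgraph) set on
which `h` is constant, all of whose outside neighbors are strictly higher. -/
def IsMinPlateau (G : SimpleGraph V) (h : V → ℝ) (P : Set V) : Prop :=
  P.Nonempty ∧ (G.induce P).Connected ∧
  (∀ u ∈ P, ∀ v ∈ P, h u = h v) ∧
  (∀ u ∉ P, ∀ v ∈ P, G.Adj u v → h v < h u)

/-- A local-maximum plateau. -/
def IsMaxPlateau (G : SimpleGraph V) (h : V → ℝ) (P : Set V) : Prop :=
  P.Nonempty ∧ (G.induce P).Connected ∧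
  (∀ u ∈ P, ∀ v ∈ P, h u = h v) ∧
  (∀ u ∉ P, ∀ v ∈ P, G.Adj u v → h u < h v)

/-- The number of local-minimum plateaus. -/
noncomputable def locmin (G : SimpleGraph V) (h : V → ℝ) : ℕ :=
  {P : Set V | IsMinPlateau G h P}.ncard

/-- The number of local-maximum plateaus. -/
noncomputable def locmax (G : SimpleGraph V) (h : V → ℝ) : ℕ :=
  {P : Set V | IsMaxPlateau G h P}.ncard

/-- The inverter gadget: two white vertices `w₁, w₂` (the `Fin 2` part),
`k` red vertices and `k` blue vertices, each colored vertex adjacent to both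
white vertices, and no other edges. -/
def gadget (k : ℕ) : SimpleGraph (Fin 2 ⊕ (Fin k ⊕ Fin k)) :=
  SimpleGraph.fromRel (fun x y =>
    match x, y with
    | Sum.inl _, Sum.inr _ => True
    | _, _ => False)

lemma star_connected (G : SimpleGraph V) (s : Set V) (h : V) (hh : h ∈ s)
    (hadj : ∀ v ∈ s, v = h ∨ G.Adj v h) : (G.induce s).Connected := by
  rw [connected_iff]
  have key : ∀ u : s, (G.induce s).Reachable u ⟨h, hh⟩ := by
    rintro ⟨u, hu⟩
    rcases hadj u hu with rfl | ha
    · exact Reachable.refl _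
    · exact Adj.reachable (by exact ha)
  exact ⟨fun u v => (key u).trans (key v).symm, ⟨⟨h, hh⟩⟩⟩

lemma card_cc_no_edges (G : SimpleGraph V) (h : ∀ u v, ¬ G.Adj u v) :
    Nat.card G.ConnectedComponent = Nat.card V := by
  refine (Nat.card_eq_of_bijective G.connectedComponentMk ?_).symm
  constructor
  · intro u v huv
    obtain ⟨w⟩ := ConnectedComponent.exact huv
    cases w with
    | nil => rfl
    | cons ha _ => exact absurd ha (h _ _)
  · exact Quot.exists_rep

lemma gadget_adj (k : ℕ) (z : Fin k ⊕ Fin k) (i : Fin 2) :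
    (gadget k).Adj (Sum.inr z) (Sum.inl i) := by
  simp [gadget]

lemma gadget_not_adj (k : ℕ) (z z' : Fin k ⊕ Fin k) :
    ¬ (gadget k).Adj (Sum.inr z) (Sum.inr z') := by
  simp [gadget]

lemma conn_of (k : ℕ) (c : Fin 2 ⊕ (Fin k ⊕ Fin k) → Bool) (b : Bool) (i j : Fin 2)
    (hij : ∀ x : Fin 2, x = i ∨ x = j)
    (hci : c (Sum.inl i) = b) (hcj : c (Sum.inl j) = !b) :
    ((gadget k).induce {v | c v = b}).Connected := by
  apply star_connected _ _ (Sum.inl i) hci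
  rintro (x | z) hv
  · left
    rcases hij x with rfl | rfl
    · rfl
    · exfalso
      rw [Set.mem_setOf_eq, hcj] at hv
      cases b <;> simp_all
  · right
    exact gadget_adj k z i

lemma count_of (k : ℕ) (c : Fin 2 ⊕ (Fin k ⊕ Fin k) → Bool) (b : Bool)
    (h0 : c (Sum.inl 0) = !b) (h1 : c (Sum.inl 1) = !b)
    (e : Fin k → Fin k ⊕ Fin k) (he : Function.Injective e)
    (hRB : ∀ z : Fin k ⊕ Fin k, (c (Sum.inr z) = b ↔ ∃ r : Fin k, z = e r)) :
    Nat.card ((gadget k).induce {v | c v = b}).ConnectedComponent = k := by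
  have mem : ∀ v ∈ {v | c v = b}, ∃ r : Fin k, v = Sum.inr (e r) := by
    rintro (x | z) hv
    · exfalso
      have : x = 0 ∨ x = 1 := by omega
      rcases this with rfl | rfl <;>
        (rw [Set.mem_setOf_eq] at hv; cases b <;> simp_all)
    · obtain ⟨r, rfl⟩ := (hRB z).mp hv
      exact ⟨r, rfl⟩
  rw [card_cc_no_edges]
  · have hf : Function.Bijective
        (fun r : Fin k => (⟨Sum.inr (e r), (hRB (e r)).mpr ⟨r, rfl⟩⟩ :
          {v | c v = b})) := by
      constructor
      · intro a a' h
        exact he (by simpa using congrArg Subtype.val h)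
      · rintro ⟨v, hv⟩
        obtain ⟨r, rfl⟩ := mem v hv
        exact ⟨r, rfl⟩
    rw [← Nat.card_eq_of_bijective _ hf]
    simp
  · rintro ⟨u, hu⟩ ⟨v, hv⟩ hadj
    obtain ⟨r, rfl⟩ := mem u hu
    obtain ⟨r', rfl⟩ := mem v hv
    exact gadget_not_adj k _ _ hadj

theorem stmt13 (k : ℕ) (hk : 1 ≤ k)
    (c : Fin 2 ⊕ (Fin k ⊕ Fin k) → Bool)
    (hR : ∀ r : Fin k, c (Sum.inr (Sum.inl r)) = true)
    (hB : ∀ b : Fin k, c (Sum.inr (Sum.inr b)) = false) :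
    (c (Sum.inl 0) ≠ c (Sum.inl 1) →
      ((gadget k).induce {v | c v = true}).Connected ∧
      ((gadget k).induce {v | c v = false}).Connected) ∧
    (c (Sum.inl 0) = true → c (Sum.inl 1) = true →
      Nat.card ((gadget k).induce {v | c v = false}).ConnectedComponent = k) ∧
    (c (Sum.inl 0) = false → c (Sum.inl 1) = false →
      Nat.card ((gadget k).induce {v | c v = true}).ConnectedComponent = k) := by
  have h01 : ∀ x : Fin 2, x = 0 ∨ x = 1 := by omega
  have h10 : ∀ x : Fin 2, x = 1 ∨ x = 0 := fun x => (h01 x).symm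
  refine ⟨?_, ?_, ?_⟩
  · intro hne
    cases hc0 : c (Sum.inl 0) <;> cases hc1 : c (Sum.inl 1) <;> simp_all
    · exact ⟨conn_of k c true 1 0 (by omega) hc1 (by simp [hc0]),
        conn_of k c false 0 1 (by omega) hc0 (by simp [hc1])⟩
    · exact ⟨conn_of k c true 0 1 (by omega) hc0 (by simp [hc1]),
        conn_of k c false 1 0 (by omega) hc1 (by simp [hc0])⟩
  · intro h0 h1
    exact count_of k c false (by simp [h0]) (by simp [h1]) Sum.inr Sum.inr_injective (by
      rintro (r | b)
      · simp [hR r]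
      · simp [hB b])
  · intro h0 h1
    exact count_of k c true (by simp [h0]) (by simp [h1]) Sum.inl Sum.inl_injective (by
      rintro (r | b)
      · simp [hR r]
      · simp [hB b])
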